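/- Every nonzero polynomial h ∈ K̄[z] over an algebraically closed field K̄ admits a total part-p-th-power decomposition: there exist q, ρ ∈ K̄[z] with deg q ≤ ⌊deg h / p⌋, h = q^p + ρ, and every monomial of ρ having degree not divisible by p. Equivalently, given the coefficients a_0, …, a_m ∈ K̄ of the terms of h of degrees divisible by p (with m = ⌊deg h / p⌋), there exists q ∈ K̄[z] of degree at most m such that for each 0 ≤ i ≤ m the degree-pi coefficient of q^p equals a_i. -/

import Mathlib

open Polynomial

namespace S5

open MvPolynomial

variable {K : Type*} [Field K]

section Generic

variable (K) (m : ℕ)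

/-- the generic polynomial of degree ≤ m -/
noncomputable def Q : Polynomial (MvPolynomial (Fin (m+1)) K) :=
  ∑ j : Fin (m+1), Polynomial.C (MvPolynomial.X j) * Polynomial.X ^ (j : ℕ)

lemma Q_coeff (d : ℕ) :
    (Q K m).coeff d = if h : d < m + 1 then MvPolynomial.X ⟨d, h⟩ else 0 := by
  rw [Q, Polynomial.finset_sum_coeff]
  have : ∀ j : Fin (m+1), (Polynomial.C (MvPolynomial.X (R := K) j) * Polynomial.X ^ (j : ℕ)).coeff d
      = if (j : ℕ) = d then MvPolynomial.X j else 0 := by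
    intro j
    rw [Polynomial.coeff_C_mul, Polynomial.coeff_X_pow]
    split_ifs with h1 h2 h3 <;> simp_all
  simp_rw [this]
  split_ifs with h
  · rw [Finset.sum_eq_single (⟨d, h⟩ : Fin (m+1))]
    · simp
    · intro j _ hj
      rw [if_neg]
      intro hc
      exact hj (Fin.ext hc)
    · simp
  · apply Finset.sum_eq_zero
    intro j _
    rw [if_neg]
    intro hc
    exact h (hc ▸ j.isLt)

/-- the coefficients of powers of Q are sums of monomials of fixed total degree and moment -/
lemma support_coeff_Q_pow (k : ℕ) (t : ℕ) (μ : Fin (m+1) →₀ ℕ)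
    (hμ : μ ∈ (((Q K m) ^ k).coeff t).support) :
    (∑ j, μ j) = k ∧ (∑ j, μ j * (j : ℕ)) = t := by
  classical
  induction k generalizing t μ with
  | zero =>
    rw [pow_zero, Polynomial.coeff_one] at hμ
    split_ifs at hμ with h
    · subst h
      rw [MvPolynomial.mem_support_iff, MvPolynomial.coeff_one] at hμ
      split_ifs at hμ with h0
      · subst h0; simp
      · simp at hμ
    · simp at hμ
  | succ k ih =>
    rw [pow_succ', Polynomial.coeff_mul] at hμ
    rw [MvPolynomial.mem_support_iff] at hμ
    have hex : ∃ x ∈ Finset.HasAntidiagonal.antidiagonal t,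
        MvPolynomial.coeff μ ((Q K m).coeff x.1 * ((Q K m) ^ k).coeff x.2) ≠ 0 := by
      by_contra hc
      push_neg at hc
      rw [MvPolynomial.coeff_sum] at hμ
      exact hμ (Finset.sum_eq_zero hc)
    obtain ⟨⟨t1, t2⟩, hxmem, hx⟩ := hex
    rw [Finset.HasAntidiagonal.mem_antidiagonal] at hxmem
    have hμ' : μ ∈ ((Q K m).coeff t1 * ((Q K m) ^ k).coeff t2).support :=
      MvPolynomial.mem_support_iff.2 hx
    have := MvPolynomial.support_mul _ _ hμ'
    rw [Finset.mem_add] at this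
    obtain ⟨ν₁, hν₁, ν₂, hν₂, hsum⟩ := this
    -- ν₁ is in the support of Q.coeff t1
    rw [Q_coeff] at hν₁
    split_ifs at hν₁ with ht1
    · rw [MvPolynomial.support_X] at hν₁
      rw [Finset.mem_singleton] at hν₁
      subst hν₁
      obtain ⟨ih1, ih2⟩ := ih t2 ν₂ hν₂
      subst hsum
      have hs1 : ∑ j, (Finsupp.single (⟨t1, ht1⟩ : Fin (m+1)) 1) j = 1 := by
        simp [Finsupp.single_apply]
      have hs2 : ∑ j : Fin (m+1), (Finsupp.single (⟨t1, ht1⟩ : Fin (m+1)) 1) j * (j : ℕ) = t1 := by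
        simp_rw [Finsupp.single_apply, ite_mul, one_mul, zero_mul]
        rw [Finset.sum_ite_eq]
        simp
      constructor
      · simp only [Finsupp.add_apply]
        rw [Finset.sum_add_distrib, ih1, hs1]
        omega
      · simp only [Finsupp.add_apply, add_mul]
        rw [Finset.sum_add_distrib, ih2, hs2, ← hxmem]
    · simp at hν₁

/-- strictly concave positive weight -/
def wf (j : Fin (m+1)) : ℕ := 2*m*(j:ℕ) - (j:ℕ)*(j:ℕ) + 1

/-- weight of a monomial -/
def W (μ : Fin (m+1) →₀ ℕ) : ℕ := ∑ j, μ j * wf m j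

lemma wf_pos (j : Fin (m+1)) : 1 ≤ wf m j := Nat.le_add_left 1 _

lemma wf_cast (j : Fin (m+1)) : (wf m j : ℤ) = 2*m*(j:ℕ) - (j:ℕ)^2 + 1 := by
  have hj : (j : ℕ) ≤ m := Nat.lt_succ_iff.1 j.isLt
  have : (j:ℕ)*(j:ℕ) ≤ 2*m*(j:ℕ) :=
    Nat.mul_le_mul_right _ (le_trans hj (by omega))
  unfold wf
  push_cast [this]
  ring

lemma W_add (μ ν : Fin (m+1) →₀ ℕ) : W m (μ + ν) = W m μ + W m ν := by
  unfold W
  rw [← Finset.sum_add_distrib]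
  apply Finset.sum_congr rfl
  intro j _
  simp [add_mul]

lemma W_single (i : Fin (m+1)) (c : ℕ) : W m (Finsupp.single i c) = c * wf m i := by
  unfold W
  simp_rw [Finsupp.single_apply, ite_mul, zero_mul]
  rw [Finset.sum_ite_eq]
  simp

lemma W_smul (k : ℕ) (μ : Fin (m+1) →₀ ℕ) : W m (k • μ) = k * W m μ := by
  unfold W
  rw [Finset.mul_sum]
  apply Finset.sum_congr rfl
  intro j _
  simp [mul_assoc]

lemma W_zero : W m 0 = 0 := by simp [W]

/-- concavity: among exponents of total degree p and moment p*i, the weight is maximized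
strictly at `single i p` -/
lemma W_concave (p : ℕ) (μ : Fin (m+1) →₀ ℕ) (i : Fin (m+1))
    (h1 : (∑ j, μ j) = p) (h2 : (∑ j, μ j * (j:ℕ)) = p * (i:ℕ)) :
    W m μ ≤ p * wf m i ∧ (μ ≠ Finsupp.single i p → W m μ < p * wf m i) := by
  classical
  set S0 : ℤ := ∑ j, (μ j : ℤ) with hS0
  set S1 : ℤ := ∑ j, (μ j : ℤ) * (j : ℕ) with hS1
  set S2 : ℤ := ∑ j, (μ j : ℤ) * ((j : ℕ) : ℤ)^2 with hS2
  have h1' : S0 = p := by rw [hS0, ← Nat.cast_sum, h1]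
  have h2' : S1 = p * (i:ℕ) := by
    rw [hS1]
    have : ((∑ j, μ j * (j:ℕ) : ℕ) : ℤ) = ((p * (i:ℕ) : ℕ) : ℤ) := congrArg (fun t : ℕ => (t:ℤ)) h2
    push_cast at this
    rw [← this]
  have A : ∑ j, (μ j : ℤ) * (((j:ℕ):ℤ) - ((i:ℕ):ℤ))^2 = S2 - 2*((i:ℕ):ℤ)*S1 + ((i:ℕ):ℤ)^2*S0 := by
    rw [hS0, hS1, hS2, Finset.mul_sum, Finset.mul_sum, ← Finset.sum_sub_distrib,
      ← Finset.sum_add_distrib]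
    apply Finset.sum_congr rfl
    intro j _
    ring
  have B : (W m μ : ℤ) = 2*m*S1 - S2 + S0 := by
    unfold W
    rw [Nat.cast_sum, hS0, hS1, hS2, Finset.mul_sum, ← Finset.sum_sub_distrib,
      ← Finset.sum_add_distrib]
    apply Finset.sum_congr rfl
    intro j _
    push_cast [wf_cast]
    ring
  have key : (p * wf m i : ℤ) - (W m μ : ℤ) = ∑ j, (μ j : ℤ) * (((j:ℕ):ℤ) - ((i:ℕ):ℤ))^2 := by
    rw [A, B, h1', h2']
    push_cast [wf_cast]
    ring
  have nonneg : ∀ j ∈ Finset.univ, (0:ℤ) ≤ (μ j : ℤ) * (((j:ℕ):ℤ) - ((i:ℕ):ℤ))^2 := by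
    intro j _
    positivity
  constructor
  · have : (0:ℤ) ≤ (p * wf m i : ℤ) - (W m μ : ℤ) := key ▸ Finset.sum_nonneg nonneg
    exact_mod_cast by linarith [this]
  · intro hne
    have hex : ∃ j₀ : Fin (m+1), μ j₀ ≠ 0 ∧ j₀ ≠ i := by
      by_contra hc
      push_neg at hc
      apply hne
      have hsupp : μ = Finsupp.single i (μ i) := by
        ext j
        rcases eq_or_ne j i with rfl | hji
        · simp
        · rw [Finsupp.single_apply, if_neg (fun hc' => hji hc'.symm)]
          by_contra hz
          exact hji (hc j hz)
      have : (∑ j, μ j) = μ i := by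
        rw [hsupp]
        simp_rw [Finsupp.single_apply]
        rw [Finset.sum_ite_eq]
        simp
      rw [hsupp, ← this, h1]
    obtain ⟨j₀, hj₀, hji⟩ := hex
    have hterm : (1:ℤ) ≤ (μ j₀ : ℤ) * (((j₀:ℕ):ℤ) - ((i:ℕ):ℤ))^2 := by
      have hμ : (1:ℤ) ≤ (μ j₀ : ℤ) := by exact_mod_cast Nat.one_le_iff_ne_zero.2 hj₀
      have hne' : ((j₀:ℕ):ℤ) - ((i:ℕ):ℤ) ≠ 0 := by
        intro hc
        exact hji (Fin.ext (by exact_mod_cast sub_eq_zero.1 hc))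
      have : (1:ℤ) ≤ (((j₀:ℕ):ℤ) - ((i:ℕ):ℤ))^2 := by
        have h2pos : 0 < (((j₀:ℕ):ℤ) - ((i:ℕ):ℤ))^2 := by positivity
        omega
      nlinarith
    have : (0:ℤ) < (p * wf m i : ℤ) - (W m μ : ℤ) := by
      rw [key]
      calc (0:ℤ) < 1 := one_pos
      _ ≤ (μ j₀ : ℤ) * (((j₀:ℕ):ℤ) - ((i:ℕ):ℤ))^2 := hterm
      _ ≤ _ := Finset.single_le_sum nonneg (Finset.mem_univ j₀)
    exact_mod_cast by linarith [this]


lemma W_sum {ι : Type*} (m : ℕ) (s : Finset ι) (μ : ι → (Fin (m+1) →₀ ℕ)) :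
    W m (∑ i ∈ s, μ i) = ∑ i ∈ s, W m (μ i) := by
  classical
  induction s using Finset.induction with
  | empty => simp [W_zero]
  | @insert x s hx ih => rw [Finset.sum_insert hx, Finset.sum_insert hx, W_add, ih]

end Generic

section LTW
variable {K : Type*} [CommRing K] {m : ℕ}

/-- all monomials have weight ≤ d -/
def LEW (m : ℕ) (d : ℕ) (g : MvPolynomial (Fin (m+1)) K) : Prop := ∀ μ ∈ g.support, W m μ ≤ d
/-- all monomials have weight < d -/
def LTW (m : ℕ) (d : ℕ) (g : MvPolynomial (Fin (m+1)) K) : Prop := ∀ μ ∈ g.support, W m μ < d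

lemma LTW_zero (d : ℕ) : LTW m d (0 : MvPolynomial (Fin (m+1)) K) := by
  intro μ hμ; simp at hμ

lemma LTW.toLEW {d : ℕ} {g : MvPolynomial (Fin (m+1)) K} (h : LTW m d g) : LEW m d g :=
  fun μ hμ => le_of_lt (h μ hμ)

lemma LTW.mono {d e : ℕ} (hde : d ≤ e) {g : MvPolynomial (Fin (m+1)) K} (h : LTW m d g) :
    LTW m e g := fun μ hμ => lt_of_lt_of_le (h μ hμ) hde

lemma LTW.add {d : ℕ} {f g : MvPolynomial (Fin (m+1)) K} (hf : LTW m d f) (hg : LTW m d g) :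
    LTW m d (f + g) := by
  intro μ hμ
  rcases Finset.mem_union.1 (MvPolynomial.support_add hμ) with h | h
  · exact hf μ h
  · exact hg μ h

lemma LTW.sum {ι : Type*} {d : ℕ} (s : Finset ι) (f : ι → MvPolynomial (Fin (m+1)) K)
    (h : ∀ i ∈ s, LTW m d (f i)) : LTW m d (∑ i ∈ s, f i) := by
  classical
  induction s using Finset.induction with
  | empty => simpa using LTW_zero d
  | insert _ _ hx ih =>
    rw [Finset.sum_insert hx]
    exact (h _ (Finset.mem_insert_self _ _)).add (ih fun i hi => h i (Finset.mem_insert_of_mem hi))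

lemma LEW.mul {d e : ℕ} {f g : MvPolynomial (Fin (m+1)) K} (hf : LEW m d f) (hg : LEW m e g) :
    LEW m (d + e) (f * g) := by
  classical
  intro μ hμ
  obtain ⟨ν₁, hν₁, ν₂, hν₂, rfl⟩ := Finset.mem_add.1 (MvPolynomial.support_mul _ _ hμ)
  rw [W_add]
  exact add_le_add (hf _ hν₁) (hg _ hν₂)

lemma LEW.mul_LTW {d e : ℕ} {f g : MvPolynomial (Fin (m+1)) K} (hf : LEW m d f) (hg : LTW m e g) :
    LTW m (d + e) (f * g) := by
  classical
  intro μ hμ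
  obtain ⟨ν₁, hν₁, ν₂, hν₂, rfl⟩ := Finset.mem_add.1 (MvPolynomial.support_mul _ _ hμ)
  rw [W_add]
  exact Nat.add_lt_add_of_le_of_lt (hf _ hν₁) (hg _ hν₂)

lemma LTW.mul_LEW {d e : ℕ} {f g : MvPolynomial (Fin (m+1)) K} (hf : LTW m d f) (hg : LEW m e g) :
    LTW m (d + e) (f * g) := by
  rw [mul_comm f g, add_comm d e]
  exact hg.mul_LTW hf

lemma LEW_monomial {d : ℕ} {μ : Fin (m+1) →₀ ℕ} (c : K) (h : W m μ ≤ d) :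
    LEW m d (MvPolynomial.monomial μ c) := by
  intro ν hν
  rcases Finset.mem_singleton.1 (MvPolynomial.support_monomial_subset hν)
  exact h

lemma coeff_eq_zero_of_LTW {d : ℕ} {g : MvPolynomial (Fin (m+1)) K} (h : LTW m d g)
    {μ : Fin (m+1) →₀ ℕ} (hμ : d ≤ W m μ) : MvPolynomial.coeff μ g = 0 := by
  by_contra hc
  exact absurd hμ (not_le.2 (h μ (MvPolynomial.mem_support_iff.2 hc)))

/-- powers of (monomial + lower order) -/
lemma pow_structure {μ0 : Fin (m+1) →₀ ℕ} {B : MvPolynomial (Fin (m+1)) K}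
    (hB : LTW m (W m μ0) B) (k : ℕ) :
    ∃ E, (MvPolynomial.monomial μ0 1 + B) ^ k
        = MvPolynomial.monomial (k • μ0) (1:K) + E ∧ LTW m (k * W m μ0) E := by
  induction k with
  | zero => exact ⟨0, by simp, LTW_zero (K := K) _⟩
  | succ k ih =>
    obtain ⟨E, hEeq, hE⟩ := ih
    refine ⟨MvPolynomial.monomial (k • μ0) (1:K) * B + E * MvPolynomial.monomial μ0 1 + E * B,
      ?_, ?_⟩
    · rw [pow_succ, hEeq]
      have hmono : MvPolynomial.monomial (k • μ0) (1:K) * MvPolynomial.monomial μ0 1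
          = MvPolynomial.monomial ((k+1) • μ0) (1:K) := by
        rw [MvPolynomial.monomial_mul, succ_nsmul, one_mul]
      linear_combination hmono
    · have h1 : LTW m ((k+1) * W m μ0) (MvPolynomial.monomial (k • μ0) (1:K) * B) := by
        have := (LEW_monomial (m := m) (1:K) (le_of_eq (W_smul m k μ0))).mul_LTW hB
        exact this.mono (by ring_nf; omega)
      have h2 : LTW m ((k+1) * W m μ0) (E * MvPolynomial.monomial μ0 1) := by
        have := hE.mul_LEW (LEW_monomial (m := m) (1:K) (le_refl (W m μ0)))
        exact this.mono (by ring_nf; omega)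
      have h3 : LTW m ((k+1) * W m μ0) (E * B) := by
        have := hE.mul_LEW hB.toLEW
        exact this.mono (by ring_nf; omega)
      exact (h1.add h2).add h3

/-- products of (monomial + lower order) over a finset -/
lemma prod_structure {ι : Type*} (s : Finset ι) (μ : ι → (Fin (m+1) →₀ ℕ))
    (B : ι → MvPolynomial (Fin (m+1)) K) (hB : ∀ i ∈ s, LTW m (W m (μ i)) (B i)) :
    ∃ E, (∏ i ∈ s, (MvPolynomial.monomial (μ i) (1:K) + B i))
        = MvPolynomial.monomial (∑ i ∈ s, μ i) (1:K) + E ∧ LTW m (∑ i ∈ s, W m (μ i)) E := by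
  classical
  induction s using Finset.induction with
  | empty => exact ⟨0, by simp, LTW_zero (K := K) _⟩
  | @insert x s hx ih =>
    obtain ⟨E, hEeq, hE⟩ := ih fun i hi => hB i (Finset.mem_insert_of_mem hi)
    rw [Finset.prod_insert hx, hEeq, Finset.sum_insert hx, Finset.sum_insert hx]
    have hBx := hB x (Finset.mem_insert_self _ _)
    refine ⟨MvPolynomial.monomial (μ x) (1:K) * E + B x * MvPolynomial.monomial (∑ i ∈ s, μ i) (1:K)
      + B x * E, ?_, ?_⟩
    · have hmono : MvPolynomial.monomial (μ x) (1:K) * MvPolynomial.monomial (∑ i ∈ s, μ i) 1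
          = MvPolynomial.monomial (μ x + ∑ i ∈ s, μ i) (1:K) := by
        rw [MvPolynomial.monomial_mul, one_mul]
      linear_combination hmono
    · have h1 := (LEW_monomial (m := m) (1:K) (le_refl (W m (μ x)))).mul_LTW hE
      have h2 := hBx.mul_LEW (LEW_monomial (m := m) (1:K) (le_refl (W m (∑ i ∈ s, μ i))))
      rw [W_sum] at h2
      have h3 := hBx.mul_LEW hE.toLEW
      exact (h1.add h2).add (h3.mono (by omega))
end LTW

section FF
variable (K : Type*) [Field K] (p m : ℕ)

lemma exists_ne_of_ne_single {m c : ℕ} (μ : Fin (m+1) →₀ ℕ) (i : Fin (m+1))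
    (h1 : (∑ j, μ j) = c) (hne : μ ≠ Finsupp.single i c) : ∃ j₀, μ j₀ ≠ 0 ∧ j₀ ≠ i := by
  by_contra hc
  push_neg at hc
  apply hne
  have hsupp : μ = Finsupp.single i (μ i) := by
    ext j
    rcases eq_or_ne j i with rfl | hji
    · simp
    · rw [Finsupp.single_apply, if_neg (fun hc' => hji hc'.symm)]
      by_contra hz
      exact hji (hc j hz)
  have : (∑ j, μ j) = μ i := by
    rw [hsupp]
    simp_rw [Finsupp.single_apply]
    rw [Finset.sum_ite_eq]
    simp
  rw [hsupp, ← this, h1]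

/-- the coefficient of `Q^p` in degree `p*i` -/
noncomputable def Fg (i : Fin (m+1)) : MvPolynomial (Fin (m+1)) K :=
  ((Q K m) ^ p).coeff (p * (i : ℕ))

lemma Fg_coeff_single (i : Fin (m+1)) :
    MvPolynomial.coeff (Finsupp.single i p) (Fg K p m i) = 1 := by
  classical
  set vec : Fin (m+1) → K := fun j => if j = i then (1:K) else 0 with hvec
  have hmap : Polynomial.map (MvPolynomial.eval vec) (Q K m) = Polynomial.X ^ (i:ℕ) := by
    ext d
    rw [Polynomial.coeff_map, Q_coeff, Polynomial.coeff_X_pow]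
    split_ifs with h h2 h3
    · subst h2
      simp [hvec]
    · simp only [MvPolynomial.eval_X, hvec]
      rw [if_neg]
      intro hc
      exact h2 (by rw [← hc])
    · exact absurd (h3 ▸ i.isLt) h
    · simp
  have h1 : MvPolynomial.eval vec (Fg K p m i) = 1 := by
    unfold Fg
    rw [show MvPolynomial.eval vec (((Q K m)^p).coeff (p * (i:ℕ)))
        = (Polynomial.map (MvPolynomial.eval vec) ((Q K m)^p)).coeff (p * (i:ℕ)) from
      (Polynomial.coeff_map _ _).symm]
    rw [Polynomial.map_pow, hmap, ← pow_mul, Polynomial.coeff_X_pow, if_pos (mul_comm p (i:ℕ))]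
  have h2 : MvPolynomial.eval vec (Fg K p m i)
      = MvPolynomial.coeff (Finsupp.single i p) (Fg K p m i) := by
    rw [MvPolynomial.eval_eq']
    rw [Finset.sum_eq_single (Finsupp.single i p)]
    · have : (∏ j, vec j ^ (Finsupp.single i p) j) = 1 := by
        apply Finset.prod_eq_one
        intro j _
        rcases eq_or_ne j i with rfl | hji
        · simp [hvec]
        · rw [Finsupp.single_apply, if_neg (fun hc => hji hc.symm), pow_zero]
      rw [this, mul_one]
    · intro μ hμ hne
      obtain ⟨hdeg, _⟩ := support_coeff_Q_pow K m p _ μ hμ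
      obtain ⟨j₀, hj₀, hji⟩ := exists_ne_of_ne_single μ i hdeg hne
      rw [Finset.prod_eq_zero (Finset.mem_univ j₀), mul_zero]
      rw [hvec]
      simp only [if_neg hji]
      exact zero_pow hj₀
    · intro hns
      rw [MvPolynomial.notMem_support_iff.1 hns, zero_mul]
  rw [← h2, h1]

lemma Fg_structure (i : Fin (m+1)) :
    ∃ G, Fg K p m i = MvPolynomial.monomial (Finsupp.single i p) (1:K) + G
      ∧ LTW m (p * wf m i) G := by
  classical
  refine ⟨Fg K p m i - MvPolynomial.monomial (Finsupp.single i p) (1:K), by ring, ?_⟩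
  intro μ hμ
  rw [MvPolynomial.mem_support_iff, MvPolynomial.coeff_sub, MvPolynomial.coeff_monomial] at hμ
  rcases eq_or_ne μ (Finsupp.single i p) with rfl | hne
  · rw [if_pos rfl, Fg_coeff_single, sub_self] at hμ
    exact absurd rfl hμ
  · rw [if_neg (fun hc => hne hc.symm), sub_zero] at hμ
    have hsupp : μ ∈ (Fg K p m i).support := MvPolynomial.mem_support_iff.2 hμ
    obtain ⟨hdeg, hmom⟩ := support_coeff_Q_pow K m p _ μ hsupp
    exact (W_concave m p μ i hdeg hmom).2 hne

end FF

lemma Fg_def (K : Type*) [Field K] (p m : ℕ) (i : Fin (m+1)) :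
    Fg K p m i = ((Q K m) ^ p).coeff (p * (i : ℕ)) := rfl

section Indep
variable (K : Type*) [Field K] (p m : ℕ)

lemma sum_smul_single (α : Fin (m+1) →₀ ℕ) :
    (∑ j, α j • Finsupp.single j p) = p • α := by
  ext j'
  rw [Finsupp.finset_sum_apply]
  have hterm : ∀ j : Fin (m+1), (α j • Finsupp.single j p) j' = if j = j' then α j * p else 0 := by
    intro j
    rw [Finsupp.smul_apply, Finsupp.single_apply]
    split_ifs <;> simp
  simp_rw [hterm]
  rw [Finset.sum_ite_eq']
  simp [mul_comm]

/-- expansion of a product of powers of the `Fg` -/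
lemma prod_Fg_pow (α : Fin (m+1) →₀ ℕ) :
    ∃ E, (∏ j, (Fg K p m j) ^ α j) = MvPolynomial.monomial (p • α) (1:K) + E
      ∧ LTW m (p * W m α) E := by
  classical
  -- for each j, get the structure of Fg j and then of its powers
  have hstep : ∀ j : Fin (m+1), ∃ Ej, (Fg K p m j) ^ α j
      = MvPolynomial.monomial (α j • Finsupp.single j p) (1:K) + Ej
      ∧ LTW m (W m (α j • Finsupp.single j p)) Ej := by
    intro j
    obtain ⟨G, hGeq, hGlt⟩ := Fg_structure K p m j
    have hGlt' : LTW m (W m (Finsupp.single j p)) G := by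
      rwa [W_single]
    obtain ⟨Ej, hEj, hEjlt⟩ := pow_structure hGlt' (α j)
    refine ⟨Ej, by rw [← hGeq] at hEj; exact hEj, ?_⟩
    rwa [W_smul]
  choose M hMeq hMlt using hstep
  obtain ⟨E, hEeq, hElt⟩ := prod_structure Finset.univ (fun j => α j • Finsupp.single j p) M
    (fun j _ => hMlt j)
  refine ⟨E, ?_, ?_⟩
  · rw [show (p • α) = ∑ j, α j • Finsupp.single j p from (sum_smul_single p m α).symm, ← hEeq]
    exact Finset.prod_congr rfl fun j _ => hMeq j
  · have : (∑ j, W m (α j • Finsupp.single j p)) = p * W m α := by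
      simp_rw [W_smul, W_single, W]
      rw [Finset.mul_sum]
      apply Finset.sum_congr rfl
      intro j _
      ring
    rwa [this] at hElt

theorem Fg_algIndep (hp : 0 < p) : AlgebraicIndependent K (Fg K p m) := by
  classical
  rw [algebraicIndependent_iff]
  intro P hP
  by_contra hPne
  obtain ⟨αs, hαmem, hmax⟩ := Finset.exists_max_image P.support (fun α => W m α)
    (MvPolynomial.support_nonempty.2 hPne)
  -- expand aeval
  have hexp : MvPolynomial.aeval (Fg K p m) P
      = ∑ α ∈ P.support, MvPolynomial.C (MvPolynomial.coeff α P) * ∏ j, (Fg K p m j) ^ α j := by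
    rw [MvPolynomial.aeval_def, MvPolynomial.eval₂_eq']
    apply Finset.sum_congr rfl
    intro α _
    rw [MvPolynomial.algebraMap_eq]
  choose E hEeq hElt using fun α => prod_Fg_pow K p m α
  have hco : MvPolynomial.coeff (p • αs) (MvPolynomial.aeval (Fg K p m) P)
      = MvPolynomial.coeff αs P := by
    rw [hexp, MvPolynomial.coeff_sum]
    rw [Finset.sum_eq_single αs]
    · rw [hEeq αs, MvPolynomial.coeff_C_mul, MvPolynomial.coeff_add, MvPolynomial.coeff_monomial,
        if_pos rfl, coeff_eq_zero_of_LTW (hElt αs) (le_of_eq (W_smul m p αs).symm), add_zero,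
        mul_one]
    · intro α hα hne
      have hz1 : MvPolynomial.coeff (p • αs) (E α) = 0 :=
        coeff_eq_zero_of_LTW (hElt α)
          (by rw [W_smul]; exact Nat.mul_le_mul_left p (hmax α hα))
      have hz2 : (p • α) ≠ (p • αs) := by
        intro hc
        apply hne
        ext j
        have := DFunLike.congr_fun hc j
        simp only [Finsupp.smul_apply, smul_eq_mul] at this
        exact Nat.eq_of_mul_eq_mul_left hp this
      rw [hEeq α, MvPolynomial.coeff_C_mul, MvPolynomial.coeff_add, MvPolynomial.coeff_monomial,
        if_neg hz2, hz1, add_zero, mul_zero]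
    · intro hns
      exact absurd hαmem hns
  rw [hP, MvPolynomial.coeff_zero] at hco
  exact MvPolynomial.mem_support_iff.1 hαmem hco.symm

end Indep
section Fin
variable (K : Type*) [Field K] (p m : ℕ)

/-- the subalgebra generated by the `Fg` -/
noncomputable abbrev Asub : Subalgebra K (MvPolynomial (Fin (m+1)) K) :=
  Algebra.adjoin K (Set.range (Fg K p m))

/-- monomial generators with exponents < p -/
noncomputable def genSet : Finset (MvPolynomial (Fin (m+1)) K) := by
  classical
  exact Finset.image (fun f : Fin (m+1) → Fin p =>
    MvPolynomial.monomial (Finsupp.equivFunOnFinite.symm fun j => ((f j : ℕ))) (1:K))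
    Finset.univ

lemma span_genSet (hp : 0 < p) :
    Submodule.span (Asub K p m) ((genSet K p m : Finset _) : Set (MvPolynomial (Fin (m+1)) K))
      = ⊤ := by
  classical
  set SP := Submodule.span (Asub K p m)
    ((genSet K p m : Finset _) : Set (MvPolynomial (Fin (m+1)) K)) with hSP
  have key : ∀ N : ℕ, ∀ (μ : Fin (m+1) →₀ ℕ) (c : K), W m μ ≤ N →
      MvPolynomial.monomial μ c ∈ SP := by
    intro N
    induction N using Nat.strong_induction_on with
    | _ N ih =>
      intro μ c hWμ
      by_cases hcase : ∀ j, μ j < p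
      · -- base case: the monomial is (a scalar multiple of) a generator
        have hmem : MvPolynomial.monomial μ (1:K) ∈ genSet K p m := by
          rw [genSet, Finset.mem_image]
          refine ⟨fun j => ⟨μ j, hcase j⟩, Finset.mem_univ _, ?_⟩
          exact congrArg (fun ν : Fin (m+1) →₀ ℕ => MvPolynomial.monomial ν (1:K))
            (Finsupp.equivFunOnFinite_symm_coe μ)
        have hsp : MvPolynomial.monomial μ (1:K) ∈ SP :=
          Submodule.subset_span (by exact_mod_cast hmem)
        have := Submodule.smul_mem SP (algebraMap K (Asub K p m) c) hsp
        rwa [show (algebraMap K (Asub K p m) c) • MvPolynomial.monomial μ (1:K)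
            = MvPolynomial.monomial μ c from ?_] at this
        rw [Algebra.smul_def]
        rw [show (algebraMap (Asub K p m) (MvPolynomial (Fin (m+1)) K))
              (algebraMap K (Asub K p m) c) = MvPolynomial.C c from rfl]
        rw [MvPolynomial.C_mul_monomial, mul_one]
      · push_neg at hcase
        obtain ⟨i, hip⟩ := hcase
        set μ' := μ - Finsupp.single i p with hμ'
        have hdecomp : μ = Finsupp.single i p + μ' := by
          ext j
          rw [Finsupp.add_apply, hμ', Finsupp.tsub_apply, Finsupp.single_apply]
          rcases eq_or_ne i j with rfl | hji
          · rw [if_pos rfl]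
            omega
          · rw [if_neg hji]
            omega
        have hWeq : W m μ = p * wf m i + W m μ' := by
          rw [hdecomp, W_add, W_single]
        have hWlt : W m μ' < W m μ := by
          have h1 := wf_pos m i
          have : 1 ≤ p * wf m i := Nat.one_le_iff_ne_zero.2 (by positivity)
          omega
        obtain ⟨G, hGeq, hGlt⟩ := Fg_structure K p m i
        -- monomial μ c = Fg i * monomial μ' c - G * monomial μ' c
        have hkey : MvPolynomial.monomial μ c
            = Fg K p m i * MvPolynomial.monomial μ' c - G * MvPolynomial.monomial μ' c := by
          have h1 : MvPolynomial.monomial μ c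
              = MvPolynomial.monomial (Finsupp.single i p) (1:K)
                * MvPolynomial.monomial μ' c := by
            rw [MvPolynomial.monomial_mul, one_mul, ← hdecomp]
          rw [h1, hGeq]
          ring
        rw [hkey]
        apply sub_mem
        · have hFmem : Fg K p m i ∈ Asub K p m :=
            Algebra.subset_adjoin ⟨i, rfl⟩
          have hμ'mem : MvPolynomial.monomial μ' c ∈ SP :=
            ih (W m μ') (lt_of_lt_of_le hWlt hWμ) μ' c le_rfl
          have := Submodule.smul_mem SP (⟨Fg K p m i, hFmem⟩ : Asub K p m) hμ'mem
          rwa [show (⟨Fg K p m i, hFmem⟩ : Asub K p m) • MvPolynomial.monomial μ' c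
              = Fg K p m i * MvPolynomial.monomial μ' c from rfl] at this
        · -- G * monomial μ' c has all monomials of weight < W μ ≤ N
          have hGlt' : LTW m (p * wf m i + W m μ') (G * MvPolynomial.monomial μ' c) :=
            hGlt.mul_LEW (LEW_monomial (m := m) c le_rfl)
          rw [← hWeq] at hGlt'
          rw [show G * MvPolynomial.monomial μ' c
              = ∑ ν ∈ (G * MvPolynomial.monomial μ' c).support,
                  MvPolynomial.monomial ν
                    (MvPolynomial.coeff ν (G * MvPolynomial.monomial μ' c)) from
            (MvPolynomial.support_sum_monomial_coeff _).symm]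
          apply Submodule.sum_mem
          intro ν hν
          exact ih (W m ν) (lt_of_lt_of_le (hGlt' ν hν) hWμ) ν _ le_rfl
  rw [eq_top_iff]
  intro g _
  rw [show g = ∑ ν ∈ g.support, MvPolynomial.monomial ν (MvPolynomial.coeff ν g) from
    (MvPolynomial.support_sum_monomial_coeff _).symm]
  apply Submodule.sum_mem
  intro ν _
  exact key (W m ν) ν _ le_rfl

theorem finite_over_Asub (hp : 0 < p) :
    Module.Finite (Asub K p m) (MvPolynomial (Fin (m+1)) K) :=
  ⟨⟨genSet K p m, span_genSet K p m hp⟩⟩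

end Fin
section End
variable (K : Type*) [Field K] (p m : ℕ)

theorem exists_point [IsAlgClosed K] (hp : 0 < p) (a : Fin (m+1) → K) :
    ∃ b : Fin (m+1) → K, ∀ i, MvPolynomial.eval b (Fg K p m i) = a i := by
  classical
  have hind := Fg_algIndep K p m hp
  let ψ : Asub K p m →ₐ[K] K :=
    (MvPolynomial.aeval a).comp (hind.aevalEquiv.symm : Asub K p m →ₐ[K] _)
  have hψF : ∀ i, ψ (hind.aevalEquiv (MvPolynomial.X i)) = a i := by
    intro i
    show (MvPolynomial.aeval a) (hind.aevalEquiv.symm (hind.aevalEquiv (MvPolynomial.X i))) = a i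
    rw [AlgEquiv.symm_apply_apply, MvPolynomial.aeval_X]
  have hψsurj : Function.Surjective ψ := fun c =>
    ⟨algebraMap K (Asub K p m) c, ψ.commutes c⟩
  haveI hMmax : (RingHom.ker (ψ : Asub K p m →+* K)).IsMaximal :=
    RingHom.ker_isMaximal_of_surjective _ hψsurj
  haveI := finite_over_Asub K p m hp
  haveI : Algebra.IsIntegral (Asub K p m) (MvPolynomial (Fin (m+1)) K) :=
    Algebra.IsIntegral.of_finite _ _
  have hinj : Function.Injective (algebraMap (Asub K p m) (MvPolynomial (Fin (m+1)) K)) :=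
    fun x y hxy => Subtype.ext hxy
  obtain ⟨P, hPmax, hPcomap⟩ := Ideal.exists_ideal_over_maximal_of_isIntegral
    (R := Asub K p m) (S := MvPolynomial (Fin (m+1)) K)
    (RingHom.ker (ψ : Asub K p m →+* K))
    (by rw [(RingHom.injective_iff_ker_eq_bot _).1 hinj]; exact bot_le)
  obtain ⟨b, hb⟩ := MvPolynomial.isMaximal_iff_eq_vanishingIdeal_singleton.1 hPmax
  refine ⟨b, fun i => ?_⟩
  set x : Asub K p m := hind.aevalEquiv (MvPolynomial.X i) - algebraMap K (Asub K p m) (a i)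
    with hx
  have hxker : x ∈ RingHom.ker (ψ : Asub K p m →+* K) := by
    rw [RingHom.mem_ker]
    show ψ _ = 0
    rw [hx, map_sub, hψF, ψ.commutes]
    simp
  have hxP : (algebraMap (Asub K p m) (MvPolynomial (Fin (m+1)) K)) x ∈ P := by
    rw [← hPcomap] at hxker
    exact hxker
  have hcoe : (algebraMap (Asub K p m) (MvPolynomial (Fin (m+1)) K)) x
      = Fg K p m i - MvPolynomial.C (a i) := by
    rw [hx, RingHom.map_sub (algebraMap (Asub K p m) (MvPolynomial (Fin (m+1)) K))]
    congr 1
    exact (hind.algebraMap_aevalEquiv (MvPolynomial.X i)).trans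
      (by rw [MvPolynomial.aeval_X])
  rw [hcoe, hb, MvPolynomial.mem_vanishingIdeal_singleton_iff, map_sub,
    MvPolynomial.aeval_C, sub_eq_zero] at hxP
  exact hxP

end End
end S5

open S5

/-- Proposition 4.9: every nonzero polynomial over an algebraically closed
field admits a total part-`p`-th-power decomposition `h = q^p + ρ` with
`deg q ≤ ⌊deg h / p⌋` and every monomial of `ρ` of degree not divisible by `p`. -/
theorem statement5 {K : Type*} [Field K] [IsAlgClosed K] (p : ℕ) (hp : p.Prime)
    (h : K[X]) (hh : h ≠ 0) :
    ∃ q ρ : K[X], h = q ^ p + ρ ∧ q.natDegree ≤ h.natDegree / p ∧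
      ∀ i : ℕ, p ∣ i → ρ.coeff i = 0 := by
  classical
  have hp0 : 0 < p := hp.pos
  set m := h.natDegree / p with hm
  obtain ⟨b, hb⟩ := exists_point K p m hp0 (fun i => h.coeff (p * (i : ℕ)))
  set q : K[X] := Polynomial.map (MvPolynomial.eval b) (Q K m) with hq
  have hqd : q.natDegree ≤ m := by
    apply Polynomial.natDegree_le_iff_coeff_eq_zero.2
    intro N hN
    rw [hq, Polynomial.coeff_map, Q_coeff, dif_neg (by omega), map_zero]
  have hqpow : ∀ c : ℕ, c < m + 1 →
      (q ^ p).coeff (p * c) = h.coeff (p * c) := by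
    intro c hc
    have : (q ^ p).coeff (p * c) = MvPolynomial.eval b (Fg K p m ⟨c, hc⟩) := by
      rw [Fg_def]
      show (q ^ p).coeff (p * c) = MvPolynomial.eval b (((Q K m) ^ p).coeff (p * c))
      rw [hq, ← Polynomial.map_pow, Polynomial.coeff_map]
    rw [this, hb ⟨c, hc⟩]
  refine ⟨q, h - q ^ p, by ring, hqd, ?_⟩
  rintro i ⟨c, rfl⟩
  rw [Polynomial.coeff_sub]
  rcases lt_or_ge c (m+1) with hc | hc
  · rw [hqpow c hc, sub_self]
  · have hhz : h.coeff (p * c) = 0 := by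
      apply Polynomial.coeff_eq_zero_of_natDegree_lt
      have h1 : h.natDegree < (m + 1) * p := by
        rw [← Nat.div_lt_iff_lt_mul hp0, ← hm]
        omega
      calc h.natDegree < (m+1) * p := h1
      _ ≤ c * p := Nat.mul_le_mul_right p hc
      _ = p * c := mul_comm c p
    have hqz : (q ^ p).coeff (p * c) = 0 := by
      apply Polynomial.coeff_eq_zero_of_natDegree_lt
      calc (q ^ p).natDegree ≤ p * q.natDegree := Polynomial.natDegree_pow_le
      _ ≤ p * m := Nat.mul_le_mul_left p hqd
      _ < p * (m+1) := (Nat.mul_lt_mul_left hp0).2 (Nat.lt_succ_self m)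
      _ ≤ p * c := Nat.mul_le_mul_left p hc
    rw [hhz, hqz, sub_self]
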